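/- Assume that for every FU k and every feasible opponent vector q_{-k} ∈ ∏_{j≠k}[0, p_j^max]: (i) λ_k·h_{k,0} < W·G_k(q_{-k})/p_a, and (ii) the best response b = p̂_k(q_{-k}) satisfies h_{k,k}·b² ≥ p_a·(N_k + h_{0,k}·p_0 + h_{k,k}·b + Σ_{j≠k} h_{j,k}·q_j). Then the follower game has exactly one Nash equilibrium: there is a unique power vector p* ∈ ∏_k [0, p_k^max] such that for every k and every p_k ∈ [0, p_k^max], u_k(p*_k, p*_{-k}) ≥ u_k(p_k, p*_{-k}). (Theorem 2.) -/

import Mathlib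

open Real Finset

/-- SINR of FU `k`. -/
noncomputable def sinr {K : ℕ} (hff : Fin K → Fin K → ℝ) (h0f N : Fin K → ℝ)
    (p0 : ℝ) (k : Fin K) (p : Fin K → ℝ) : ℝ :=
  hff k k * p k / (N k + h0f k * p0 + ∑ j ∈ Finset.univ.erase k, hff j k * p j)

/-- Net payoff of FU `k`. -/
noncomputable def payoff {K : ℕ} (W pa p0 : ℝ) (hff : Fin K → Fin K → ℝ)
    (h0f hf0 N lam : Fin K → ℝ) (k : Fin K) (p : Fin K → ℝ) : ℝ :=
  W * Real.log (1 + sinr hff h0f N p0 k p) / (p k + pa) - lam k * hf0 k * p k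

/-- `G_k(p_{-k})`. -/
noncomputable def Gk {K : ℕ} (hff : Fin K → Fin K → ℝ) (h0f N : Fin K → ℝ)
    (p0 : ℝ) (k : Fin K) (p : Fin K → ℝ) : ℝ :=
  hff k k / (N k + h0f k * p0 + ∑ j ∈ Finset.univ.erase k, hff j k * p j)

/-- `x` is a best response of FU `k` to the opponents' powers in `q`. -/
def IsBestResponse {K : ℕ} (W pa p0 : ℝ) (hff : Fin K → Fin K → ℝ)
    (h0f hf0 N lam pmax : Fin K → ℝ) (k : Fin K) (q : Fin K → ℝ) (x : ℝ) : Prop :=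
  x ∈ Set.Icc (0:ℝ) (pmax k) ∧
    ∀ y ∈ Set.Icc (0:ℝ) (pmax k),
      payoff W pa p0 hff h0f hf0 N lam k (Function.update q k y) ≤
        payoff W pa p0 hff h0f hf0 N lam k (Function.update q k x)

namespace FGaux
open Set

noncomputable def uu (W pa h c D : ℝ) (p : ℝ) : ℝ :=
  W * Real.log (1 + h * p / D) / (p + pa) - c * p

noncomputable def psi (W pa h c D : ℝ) (p : ℝ) : ℝ :=
  W * (h * (p + pa) / (D + h * p) - Real.log (1 + h * p / D)) - c * (p + pa) ^ 2

noncomputable def br (W pa h c D M : ℝ) : ℝ :=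
  if 0 ≤ psi W pa h c D M then M
  else sInf {p | p ∈ Icc 0 M ∧ psi W pa h c D p = 0}

variable {W pa h c D M : ℝ}

lemma psi_strictAnti (hW : 0 < W) (hpa : 0 < pa) (hh : 0 < h) (hc : 0 ≤ c) (hD : 0 < D)
    {p1 p2 : ℝ} (h1 : 0 ≤ p1) (h12 : p1 < p2) :
    psi W pa h c D p2 < psi W pa h c D p1 := by
  have hx1 : 0 < D + h * p1 := by positivity
  have hx2 : 0 < D + h * p2 := by nlinarith
  have hlog : Real.log (1 + h * p1 / D) = Real.log (D + h * p1) - Real.log D := by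
    rw [show 1 + h * p1 / D = (D + h * p1) / D by field_simp, Real.log_div (by linarith) (by linarith)]
  have hlog2 : Real.log (1 + h * p2 / D) = Real.log (D + h * p2) - Real.log D := by
    rw [show 1 + h * p2 / D = (D + h * p2) / D by field_simp, Real.log_div (by linarith) (by linarith)]
  -- key: log (x1/x2) < x1/x2 - 1
  have hne : (D + h * p1) / (D + h * p2) ≠ 1 := by
    intro hcontra
    rw [div_eq_one_iff_eq (ne_of_gt hx2)] at hcontra
    nlinarith
  have hkey : Real.log ((D + h * p1) / (D + h * p2)) < (D + h * p1) / (D + h * p2) - 1 :=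
    Real.log_lt_sub_one_of_pos (by positivity) hne
  have hlogdiff : Real.log (D + h * p1) - Real.log (D + h * p2)
      < (D + h * p1) / (D + h * p2) - 1 := by
    rwa [Real.log_div (by linarith) (by linarith)] at hkey
  -- so log x2 - log x1 > (x2 - x1)/x2
  have hld : h * (p2 - p1) / (D + h * p2) < Real.log (D + h * p2) - Real.log (D + h * p1) := by
    have : (D + h * p1) / (D + h * p2) - 1 = -(h * (p2 - p1) / (D + h * p2)) := by
      field_simp; ring
    linarith [hlogdiff, this ▸ hlogdiff]
  -- the rational part increases by at most h (p2 - p1)/x2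
  have hrat : h * (p2 + pa) / (D + h * p2) - h * (p1 + pa) / (D + h * p1)
      ≤ h * (p2 - p1) / (D + h * p2) := by
    rw [div_sub_div _ _ (ne_of_gt hx2) (ne_of_gt hx1), div_le_div_iff₀ (by positivity) hx2]
    nlinarith [mul_nonneg (mul_nonneg (mul_nonneg hh.le (sub_nonneg.mpr h12.le)) hx2.le)
      (mul_nonneg hh.le (by linarith : (0:ℝ) ≤ p1 + pa))]
  have hsq : c * (p1 + pa) ^ 2 ≤ c * (p2 + pa) ^ 2 :=
    mul_le_mul_of_nonneg_left (by nlinarith) hc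
  have key := mul_lt_mul_of_pos_left (lt_of_le_of_lt hrat hld) hW
  unfold psi
  rw [hlog, hlog2]
  nlinarith [key, hsq]

lemma hasDerivAt_uu (hpa : 0 < pa) (hh : 0 < h) (hD : 0 < D) {p : ℝ} (hp : 0 ≤ p) :
    HasDerivAt (uu W pa h c D) (psi W pa h c D p / (p + pa) ^ 2) p := by
  have harg : 0 < 1 + h * p / D := by positivity
  have hDp : 0 < D + h * p := by positivity
  have hppa : 0 < p + pa := by linarith
  have h1 : HasDerivAt (fun q : ℝ => 1 + h * q / D) (h / D) p := by
    simpa using ((hasDerivAt_id p).const_mul h).div_const D |>.const_add 1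
  have h2 : HasDerivAt (fun q : ℝ => Real.log (1 + h * q / D)) ((h / D) / (1 + h * p / D)) p :=
    h1.log (ne_of_gt harg)
  have h3 : HasDerivAt (fun q : ℝ => W * Real.log (1 + h * q / D)) (W * ((h / D) / (1 + h * p / D))) p :=
    h2.const_mul W
  have h4 : HasDerivAt (fun q : ℝ => q + pa) 1 p := (hasDerivAt_id p).add_const pa
  have h5 := h3.div h4 (ne_of_gt hppa)
  have h6 := h5.sub (((hasDerivAt_id p).const_mul c))
  refine h6.congr_deriv ?_
  unfold psi
  field_simp
lemma psi_zero_pos (hW : 0 < W) (hpa : 0 < pa) (hh : 0 < h) (hD : 0 < D)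
    (hprice : c < W * (h / D) / pa) : 0 < psi W pa h c D 0 := by
  have h1 : c * pa < W * (h / D) := by rwa [lt_div_iff₀ hpa] at hprice
  have h2 := mul_lt_mul_of_pos_right h1 hpa
  unfold psi
  norm_num [Real.log_one]
  have : W * (h / D) * pa = W * (h * pa / D) := by ring
  nlinarith [this ▸ h2]

lemma continuousOn_psi (hpa : 0 < pa) (hh : 0 < h) (hD : 0 < D) :
    ContinuousOn (psi W pa h c D) (Ici 0) := by
  have hden : ∀ p ∈ Ici (0:ℝ), D + h * p ≠ 0 := fun p hp => by
    have : (0:ℝ) ≤ p := hp; positivity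
  have harg : ∀ p ∈ Ici (0:ℝ), 1 + h * p / D ≠ 0 := fun p hp => by
    have : (0:ℝ) ≤ p := hp; positivity
  apply ContinuousOn.sub
  · apply ContinuousOn.mul continuousOn_const
    apply ContinuousOn.sub
    · exact ((continuousOn_const.mul (continuousOn_id.add continuousOn_const))).div
        (continuousOn_const.add (continuousOn_const.mul continuousOn_id)) hden
    · exact (continuousOn_const.add
        ((continuousOn_const.mul continuousOn_id).div_const D)).log harg
  · exact continuousOn_const.mul ((continuousOn_id.add continuousOn_const).pow 2)

/-- Characterisation of the best response point. -/
lemma br_spec (hW : 0 < W) (hpa : 0 < pa) (hh : 0 < h) (hc : 0 ≤ c) (hD : 0 < D)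
    (hM : 0 < M) (hprice : c < W * (h / D) / pa) :
    br W pa h c D M ∈ Icc 0 M ∧ 0 < br W pa h c D M ∧ 0 ≤ psi W pa h c D (br W pa h c D M) ∧
      (br W pa h c D M < M → psi W pa h c D (br W pa h c D M) = 0) := by
  unfold br
  by_cases hcase : 0 ≤ psi W pa h c D M
  · rw [if_pos hcase]
    exact ⟨⟨hM.le, le_refl M⟩, hM, hcase, fun hlt => absurd rfl hlt.ne⟩
  · rw [if_neg hcase]
    push_neg at hcase
    -- root exists by IVT
    have hcont : ContinuousOn (psi W pa h c D) (Icc 0 M) :=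
      (continuousOn_psi hpa hh hD).mono (Icc_subset_Ici_self)
    have h0 : 0 < psi W pa h c D 0 := psi_zero_pos hW hpa hh hD hprice
    have hiv := intermediate_value_Icc' hM.le hcont
    have hmem : (0:ℝ) ∈ Icc (psi W pa h c D M) (psi W pa h c D 0) := ⟨hcase.le, h0.le⟩
    obtain ⟨r, hr, hr0⟩ := hiv hmem
    have hSr : {p | p ∈ Icc 0 M ∧ psi W pa h c D p = 0} = {r} := by
      apply Set.eq_singleton_iff_unique_mem.mpr
      refine ⟨⟨hr, hr0⟩, ?_⟩
      rintro x ⟨hx, hx0⟩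
      by_contra hne
      rcases lt_or_gt_of_ne hne with hlt | hlt
      · have := psi_strictAnti hW hpa hh hc hD hx.1 hlt
        rw [hx0, hr0] at this; exact lt_irrefl 0 this
      · have := psi_strictAnti hW hpa hh hc hD hr.1 hlt
        rw [hx0, hr0] at this; exact lt_irrefl 0 this
    rw [hSr, csInf_singleton]
    have hrpos : 0 < r := by
      rcases eq_or_lt_of_le hr.1 with he | hlt
      · exfalso; rw [← he] at hr0; linarith
      · exact hlt
    exact ⟨hr, hrpos, le_of_eq hr0.symm, fun _ => hr0⟩

/-- Any point of `[0,M]` where `psi` is nonnegative lies below `br`. -/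
lemma le_br_of_psi_nonneg (hW : 0 < W) (hpa : 0 < pa) (hh : 0 < h) (hc : 0 ≤ c) (hD : 0 < D)
    (hM : 0 < M) (hprice : c < W * (h / D) / pa) {b : ℝ} (hb : b ∈ Icc 0 M)
    (hpsi : 0 ≤ psi W pa h c D b) : b ≤ br W pa h c D M := by
  by_contra hlt
  push_neg at hlt
  obtain ⟨hbr_mem, hbr_pos, hbr_nonneg, hbr_root⟩ := br_spec hW hpa hh hc hD hM hprice
  have hroot : psi W pa h c D (br W pa h c D M) = 0 := hbr_root (lt_of_lt_of_le hlt hb.2)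
  have := psi_strictAnti hW hpa hh hc hD hbr_mem.1 hlt
  rw [hroot] at this
  linarith

/-- `br` is the unique maximizer of `uu` on `[0,M]`. -/
lemma uu_lt_uu_br (hW : 0 < W) (hpa : 0 < pa) (hh : 0 < h) (hc : 0 ≤ c) (hD : 0 < D)
    (hM : 0 < M) (hprice : c < W * (h / D) / pa) {y : ℝ} (hy : y ∈ Icc 0 M)
    (hne : y ≠ br W pa h c D M) :
    uu W pa h c D y < uu W pa h c D (br W pa h c D M) := by
  obtain ⟨hb_mem, hb_pos, hb_nonneg, hb_root⟩ := br_spec hW hpa hh hc hD hM hprice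
  set b := br W pa h c D M with hbdef
  have hcont : ∀ x ∈ Icc (0:ℝ) M, ContinuousWithinAt (uu W pa h c D) (Icc 0 M) x :=
    fun x hx => (hasDerivAt_uu hpa hh hD hx.1).continuousAt.continuousWithinAt
  rcases lt_or_gt_of_ne hne with hlt | hgt
  · -- y < b ; uu strictly increasing on [0, b]
    have hmono : StrictMonoOn (uu W pa h c D) (Icc 0 b) := by
      apply strictMonoOn_of_deriv_pos (convex_Icc 0 b)
      · exact fun x hx => (hasDerivAt_uu hpa hh hD hx.1).continuousAt.continuousWithinAt
      · intro x hx
        rw [interior_Icc] at hx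
        rw [(hasDerivAt_uu hpa hh hD hx.1.le).deriv]
        have hpsix : 0 < psi W pa h c D x := by
          have := psi_strictAnti hW hpa hh hc hD hx.1.le hx.2
          linarith
        have hsq : (0:ℝ) < (x + pa) ^ 2 := pow_pos (by linarith [hx.1]) 2
        exact div_pos hpsix hsq
    exact hmono ⟨hy.1, hlt.le⟩ ⟨hb_mem.1, le_refl b⟩ hlt
  · -- b < y ≤ M ; uu strictly decreasing on [b, M]
    have hbM : b < M := lt_of_lt_of_le hgt hy.2
    have hroot := hb_root hbM
    have hanti : StrictAntiOn (uu W pa h c D) (Icc b M) := by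
      apply strictAntiOn_of_deriv_neg (convex_Icc b M)
      · exact fun x hx => (hasDerivAt_uu hpa hh hD (le_trans hb_mem.1 hx.1)).continuousAt.continuousWithinAt
      · intro x hx
        rw [interior_Icc] at hx
        rw [(hasDerivAt_uu hpa hh hD (le_trans hb_mem.1 hx.1.le)).deriv]
        have hpsix : psi W pa h c D x < 0 := by
          have := psi_strictAnti hW hpa hh hc hD hb_mem.1 hx.1
          linarith
        have hsq : (0:ℝ) < (x + pa) ^ 2 := pow_pos (by linarith [hx.1, hb_mem.1]) 2
        exact div_neg_of_neg_of_pos hpsix hsq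
    exact hanti ⟨le_refl b, hbM.le⟩ ⟨hgt.le, hy.2⟩ hgt

/-- `br` is a maximizer of `uu` on `[0,M]`. -/
lemma uu_le_uu_br (hW : 0 < W) (hpa : 0 < pa) (hh : 0 < h) (hc : 0 ≤ c) (hD : 0 < D)
    (hM : 0 < M) (hprice : c < W * (h / D) / pa) {y : ℝ} (hy : y ∈ Icc 0 M) :
    uu W pa h c D y ≤ uu W pa h c D (br W pa h c D M) := by
  by_cases hne : y = br W pa h c D M
  · rw [hne]
  · exact (uu_lt_uu_br hW hpa hh hc hD hM hprice hy hne).le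

/-- `psi` is monotone in `D` as long as `h p^2 ≥ pa D'`. -/
lemma psi_mono_D (hW : 0 < W) (hpa : 0 < pa) (hh : 0 < h) (hD : 0 < D) {D' p : ℝ}
    (hDD' : D ≤ D') (hp : 0 ≤ p) (hcnd : pa * D' ≤ h * p ^ 2) :
    psi W pa h c D p ≤ psi W pa h c D' p := by
  have hD' : 0 < D' := lt_of_lt_of_le hD hDD'
  have hx1 : 0 < D + h * p := by positivity
  have hx2 : 0 < D' + h * p := by positivity
  have hlog1 : Real.log (1 + h * p / D) = Real.log (D + h * p) - Real.log D := by
    rw [show 1 + h * p / D = (D + h * p) / D by field_simp, Real.log_div hx1.ne' hD.ne']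
  have hlog2 : Real.log (1 + h * p / D') = Real.log (D' + h * p) - Real.log D' := by
    rw [show 1 + h * p / D' = (D' + h * p) / D' by field_simp, Real.log_div hx2.ne' hD'.ne']
  have hlt : Real.log ((D * (D' + h * p)) / (D' * (D + h * p)))
      ≤ (D * (D' + h * p)) / (D' * (D + h * p)) - 1 :=
    Real.log_le_sub_one_of_pos (by positivity)
  have h2 : Real.log ((D * (D' + h * p)) / (D' * (D + h * p)))
      = Real.log D + Real.log (D' + h * p) - (Real.log D' + Real.log (D + h * p)) := by
    rw [Real.log_div (by positivity) (by positivity), Real.log_mul hD.ne' hx2.ne',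
      Real.log_mul hD'.ne' hx1.ne']
  have h3 : (D * (D' + h * p)) / (D' * (D + h * p)) - 1
      = -(h * p * (D' - D) / (D' * (D + h * p))) := by
    field_simp
    ring
  have hlogdiff : h * p * (D' - D) / (D' * (D + h * p))
      ≤ (Real.log (D + h * p) - Real.log D) - (Real.log (D' + h * p) - Real.log D') := by
    rw [h2, h3] at hlt
    linarith
  have key : h * (p + pa) / (D + h * p) - h * (p + pa) / (D' + h * p)
      ≤ h * p * (D' - D) / (D' * (D + h * p)) := by
    rw [div_sub_div _ _ hx1.ne' hx2.ne', div_le_div_iff₀ (by positivity) (by positivity)]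
    nlinarith [mul_nonneg (mul_nonneg (mul_nonneg (sub_nonneg.2 hDD') hx1.le) hh.le)
      (sub_nonneg.2 hcnd)]
  have hcomb : h * (p + pa) / (D + h * p) - (Real.log (D + h * p) - Real.log D)
      ≤ h * (p + pa) / (D' + h * p) - (Real.log (D' + h * p) - Real.log D') := by linarith
  have hfin := mul_le_mul_of_nonneg_left hcomb hW.le
  unfold psi
  rw [hlog1, hlog2]
  linarith [hfin]

/-- strict scaling inequality for `psi`. -/
lemma psi_scale (hW : 0 < W) (hpa : 0 < pa) (hh : 0 < h) (hc : 0 ≤ c) (hD : 0 < D)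
    {α p : ℝ} (hα : 1 < α) (hp : 0 ≤ p) :
    psi W pa h c (α * D) (α * p) < psi W pa h c D p := by
  have hα0 : (0:ℝ) < α := by linarith
  have hx1 : 0 < D + h * p := by positivity
  have hlogeq : Real.log (1 + h * (α * p) / (α * D)) = Real.log (1 + h * p / D) := by
    congr 1
    field_simp
  have hrat : h * (α * p + pa) / (α * D + h * (α * p)) < h * (p + pa) / (D + h * p) := by
    have hden : 0 < α * D + h * (α * p) := by positivity
    rw [div_lt_div_iff₀ hden hx1]
    nlinarith [mul_pos (mul_pos (mul_pos hh hpa) (sub_pos.2 hα)) hx1]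
  have hsq : c * (p + pa) ^ 2 ≤ c * (α * p + pa) ^ 2 := by
    apply mul_le_mul_of_nonneg_left _ hc
    nlinarith [mul_nonneg (mul_nonneg hp (by linarith : (0:ℝ) ≤ α - 1))
      (by nlinarith : (0:ℝ) ≤ α * p + p + 2 * pa)]
  have h5 : W * (h * (α * p + pa) / (α * D + h * (α * p)) - Real.log (1 + h * p / D))
      < W * (h * (p + pa) / (D + h * p) - Real.log (1 + h * p / D)) := by
    apply (mul_lt_mul_iff_right₀ hW).2
    linarith
  unfold psi
  rw [hlogeq]
  linarith [h5, hsq]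


noncomputable def Dk {K : ℕ} (p0 : ℝ) (hff : Fin K → Fin K → ℝ) (h0f N : Fin K → ℝ)
    (k : Fin K) (q : Fin K → ℝ) : ℝ :=
  N k + h0f k * p0 + ∑ j ∈ Finset.univ.erase k, hff j k * q j

lemma payoff_update {K : ℕ} (W pa p0 : ℝ) (hff : Fin K → Fin K → ℝ)
    (h0f hf0 N lam : Fin K → ℝ) (k : Fin K) (q : Fin K → ℝ) (y : ℝ) :
    payoff W pa p0 hff h0f hf0 N lam k (Function.update q k y)
      = uu W pa (hff k k) (lam k * hf0 k) (Dk p0 hff h0f N k q) y := by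
  have hsum : ∑ j ∈ Finset.univ.erase k, hff j k * (Function.update q k y) j
      = ∑ j ∈ Finset.univ.erase k, hff j k * q j :=
    Finset.sum_congr rfl fun j hj => by
      rw [Function.update_of_ne (Finset.ne_of_mem_erase hj)]
  unfold payoff sinr uu Dk
  rw [Function.update_self, hsum]

section Game

variable {K : ℕ} {W pa p0 : ℝ} {hff : Fin K → Fin K → ℝ} {h0f hf0 N lam pmax : Fin K → ℝ}

/-- the constant part of the interference. -/
noncomputable def Dmin (p0 : ℝ) (h0f N : Fin K → ℝ) (k : Fin K) : ℝ := N k + h0f k * p0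

/-- the maximal total extra interference. -/
noncomputable def Smax (hff : Fin K → Fin K → ℝ) (pmax : Fin K → ℝ) (k : Fin K) : ℝ :=
  ∑ j ∈ Finset.univ.erase k, hff j k * pmax j

lemma Dmin_pos (hp0 : 0 ≤ p0) (hh0f : ∀ i, 0 < h0f i) (hN : ∀ i, 0 < N i) (k : Fin K) :
    0 < Dmin p0 h0f N k := by
  have := hN k; have := (hh0f k).le
  unfold Dmin; nlinarith

lemma Smax_nonneg (hhff : ∀ i j, 0 < hff i j) (hpmax : ∀ i, 0 < pmax i) (k : Fin K) :
    0 ≤ Smax hff pmax k :=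
  Finset.sum_nonneg fun j _ => le_of_lt (mul_pos (hhff j k) (hpmax j))

lemma Dk_mem (hhff : ∀ i j, 0 < hff i j) {k : Fin K} {q : Fin K → ℝ}
    (hq : ∀ i, q i ∈ Set.Icc (0:ℝ) (pmax i)) :
    Dk p0 hff h0f N k q ∈ Set.Icc (Dmin p0 h0f N k) (Dmin p0 h0f N k + Smax hff pmax k) := by
  unfold Dk Dmin Smax
  constructor
  · have : 0 ≤ ∑ j ∈ Finset.univ.erase k, hff j k * q j :=
      Finset.sum_nonneg fun j _ => mul_nonneg (hhff j k).le (hq j).1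
    linarith
  · have : ∑ j ∈ Finset.univ.erase k, hff j k * q j
        ≤ ∑ j ∈ Finset.univ.erase k, hff j k * pmax j :=
      Finset.sum_le_sum fun j _ => mul_le_mul_of_nonneg_left (hq j).2 (hhff j k).le
    linarith

lemma exists_realizer (hhff : ∀ i j, 0 < hff i j) (hpmax : ∀ i, 0 < pmax i) {k : Fin K} {D : ℝ}
    (hD : D ∈ Set.Icc (Dmin p0 h0f N k) (Dmin p0 h0f N k + Smax hff pmax k)) :
    ∃ q : Fin K → ℝ, (∀ i, q i ∈ Set.Icc (0:ℝ) (pmax i)) ∧ Dk p0 hff h0f N k q = D := by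
  rcases eq_or_lt_of_le (Smax_nonneg hhff hpmax k) with hS | hS
  · refine ⟨fun _ => 0, fun i => ⟨le_refl 0, (hpmax i).le⟩, ?_⟩
    have hD' : D = Dmin p0 h0f N k := by
      obtain ⟨h1, h2⟩ := hD; rw [← hS] at h2; linarith
    unfold Dk
    simp only [mul_zero, Finset.sum_const_zero]
    rw [hD']; unfold Dmin; ring
  · set S := Smax hff pmax k with hSdef
    set t := (D - Dmin p0 h0f N k) / S with htdef
    have ht0 : 0 ≤ t := div_nonneg (by linarith [hD.1]) hS.le
    have ht1 : t ≤ 1 := by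
      rw [div_le_one hS]; linarith [hD.2]
    refine ⟨fun j => t * pmax j, fun i => ⟨mul_nonneg ht0 (hpmax i).le, ?_⟩, ?_⟩
    · show t * pmax i ≤ pmax i
      nlinarith [hpmax i]
    · unfold Dk
      have hs1 : ∑ j ∈ Finset.univ.erase k, hff j k * (t * pmax j)
          = t * ∑ j ∈ Finset.univ.erase k, hff j k * pmax j := by
        rw [Finset.mul_sum]; exact Finset.sum_congr rfl fun j _ => by ring
      rw [hs1]
      have hSS : ∑ j ∈ Finset.univ.erase k, hff j k * pmax j = S := rfl
      rw [hSS]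
      have ht : t * S = D - Dmin p0 h0f N k := by
        rw [htdef, div_mul_cancel₀ _ hS.ne']
      have hDm : Dmin p0 h0f N k = N k + h0f k * p0 := rfl
      linarith

/-- best response as a function of the interference level `D`. -/
noncomputable def brD (W pa : ℝ) (hff : Fin K → Fin K → ℝ) (hf0 lam pmax : Fin K → ℝ)
    (k : Fin K) (D : ℝ) : ℝ :=
  br W pa (hff k k) (lam k * hf0 k) D (pmax k)

lemma price_D (hW : 0 < W) (hpa : 0 < pa)
    (hhff : ∀ i j, 0 < hff i j) (hpmax : ∀ i, 0 < pmax i)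
    (hprice : ∀ (k : Fin K) (q : Fin K → ℝ), (∀ i, q i ∈ Set.Icc (0:ℝ) (pmax i)) →
      lam k * hf0 k < W * Gk hff h0f N p0 k q / pa)
    {k : Fin K} {D : ℝ}
    (hD : D ∈ Set.Icc (Dmin p0 h0f N k) (Dmin p0 h0f N k + Smax hff pmax k)) :
    lam k * hf0 k < W * (hff k k / D) / pa := by
  obtain ⟨q, hq, hDq⟩ := exists_realizer hhff hpmax hD
  have h1 := hprice k q hq
  have hG : Gk hff h0f N p0 k q = hff k k / D := by rw [← hDq]; rfl
  rwa [hG] at h1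

lemma isBestResponse_brD (hW : 0 < W) (hpa : 0 < pa) (hp0 : 0 ≤ p0)
    (hhff : ∀ i j, 0 < hff i j) (hh0f : ∀ i, 0 < h0f i) (hhf0 : ∀ i, 0 < hf0 i)
    (hN : ∀ i, 0 < N i) (hlam : ∀ i, 0 ≤ lam i) (hpmax : ∀ i, 0 < pmax i)
    (hprice : ∀ (k : Fin K) (q : Fin K → ℝ), (∀ i, q i ∈ Set.Icc (0:ℝ) (pmax i)) →
      lam k * hf0 k < W * Gk hff h0f N p0 k q / pa)
    {k : Fin K} {D : ℝ}
    (hD : D ∈ Set.Icc (Dmin p0 h0f N k) (Dmin p0 h0f N k + Smax hff pmax k))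
    {q : Fin K → ℝ} (hq : ∀ i, q i ∈ Set.Icc (0:ℝ) (pmax i)) (hDq : Dk p0 hff h0f N k q = D) :
    IsBestResponse W pa p0 hff h0f hf0 N lam pmax k q (brD W pa hff hf0 lam pmax k D) := by
  have hDpos : 0 < D := lt_of_lt_of_le (Dmin_pos hp0 hh0f hN k) hD.1
  have hc : 0 ≤ lam k * hf0 k := mul_nonneg (hlam k) (hhf0 k).le
  have hpr := price_D hW hpa hhff hpmax hprice hD
  obtain ⟨hmem, _, _, _⟩ := br_spec hW hpa (hhff k k) hc hDpos (hpmax k) hpr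
  refine ⟨hmem, fun y hy => ?_⟩
  rw [payoff_update, payoff_update, hDq]
  exact uu_le_uu_br hW hpa (hhff k k) hc hDpos (hpmax k) hpr hy

lemma cond_brD (hW : 0 < W) (hpa : 0 < pa) (hp0 : 0 ≤ p0)
    (hhff : ∀ i j, 0 < hff i j) (hh0f : ∀ i, 0 < h0f i) (hhf0 : ∀ i, 0 < hf0 i)
    (hN : ∀ i, 0 < N i) (hlam : ∀ i, 0 ≤ lam i) (hpmax : ∀ i, 0 < pmax i)
    (hprice : ∀ (k : Fin K) (q : Fin K → ℝ), (∀ i, q i ∈ Set.Icc (0:ℝ) (pmax i)) →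
      lam k * hf0 k < W * Gk hff h0f N p0 k q / pa)
    (hcond : ∀ (k : Fin K) (q : Fin K → ℝ), (∀ i, q i ∈ Set.Icc (0:ℝ) (pmax i)) →
      ∀ b : ℝ, IsBestResponse W pa p0 hff h0f hf0 N lam pmax k q b →
        pa * (N k + h0f k * p0 + hff k k * b + ∑ j ∈ Finset.univ.erase k, hff j k * q j) ≤
          hff k k * b ^ 2)
    {k : Fin K} {D : ℝ}
    (hD : D ∈ Set.Icc (Dmin p0 h0f N k) (Dmin p0 h0f N k + Smax hff pmax k)) :
    pa * (D + hff k k * brD W pa hff hf0 lam pmax k D)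
      ≤ hff k k * (brD W pa hff hf0 lam pmax k D) ^ 2 := by
  obtain ⟨q, hq, hDq⟩ := exists_realizer hhff hpmax hD
  have hbr := isBestResponse_brD hW hpa hp0 hhff hh0f hhf0 hN hlam hpmax hprice hD hq hDq
  have h1 := hcond k q hq _ hbr
  have hsum : N k + h0f k * p0 + ∑ j ∈ Finset.univ.erase k, hff j k * q j = D := hDq
  set b := brD W pa hff hf0 lam pmax k D
  have h2 : pa * (N k + h0f k * p0 + hff k k * b + ∑ j ∈ Finset.univ.erase k, hff j k * q j)
      = pa * (D + hff k k * b) := by rw [← hsum]; ring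
  linarith [h2 ▸ h1]

lemma brD_gt_pa (hW : 0 < W) (hpa : 0 < pa) (hp0 : 0 ≤ p0)
    (hhff : ∀ i j, 0 < hff i j) (hh0f : ∀ i, 0 < h0f i) (hhf0 : ∀ i, 0 < hf0 i)
    (hN : ∀ i, 0 < N i) (hlam : ∀ i, 0 ≤ lam i) (hpmax : ∀ i, 0 < pmax i)
    (hprice : ∀ (k : Fin K) (q : Fin K → ℝ), (∀ i, q i ∈ Set.Icc (0:ℝ) (pmax i)) →
      lam k * hf0 k < W * Gk hff h0f N p0 k q / pa)
    (hcond : ∀ (k : Fin K) (q : Fin K → ℝ), (∀ i, q i ∈ Set.Icc (0:ℝ) (pmax i)) →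
      ∀ b : ℝ, IsBestResponse W pa p0 hff h0f hf0 N lam pmax k q b →
        pa * (N k + h0f k * p0 + hff k k * b + ∑ j ∈ Finset.univ.erase k, hff j k * q j) ≤
          hff k k * b ^ 2)
    {k : Fin K} {D : ℝ}
    (hD : D ∈ Set.Icc (Dmin p0 h0f N k) (Dmin p0 h0f N k + Smax hff pmax k)) :
    pa < brD W pa hff hf0 lam pmax k D := by
  have hDpos : 0 < D := lt_of_lt_of_le (Dmin_pos hp0 hh0f hN k) hD.1
  have hc : 0 ≤ lam k * hf0 k := mul_nonneg (hlam k) (hhf0 k).le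
  have hpr := price_D hW hpa hhff hpmax hprice hD
  obtain ⟨hmem, hbpos, _, _⟩ := br_spec hW hpa (hhff k k) hc hDpos (hpmax k) hpr
  have hcnd := cond_brD hW hpa hp0 hhff hh0f hhf0 hN hlam hpmax hprice hcond hD
  set b := brD W pa hff hf0 lam pmax k D
  have hbpos' : 0 < b := hbpos
  by_contra hle
  push_neg at hle
  nlinarith [mul_pos hpa hDpos, mul_nonneg (mul_pos (hhff k k) hbpos').le
    (by linarith : (0:ℝ) ≤ pa - b)]

lemma brD_mono_step (hW : 0 < W) (hpa : 0 < pa) (hp0 : 0 ≤ p0)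
    (hhff : ∀ i j, 0 < hff i j) (hh0f : ∀ i, 0 < h0f i) (hhf0 : ∀ i, 0 < hf0 i)
    (hN : ∀ i, 0 < N i) (hlam : ∀ i, 0 ≤ lam i) (hpmax : ∀ i, 0 < pmax i)
    (hprice : ∀ (k : Fin K) (q : Fin K → ℝ), (∀ i, q i ∈ Set.Icc (0:ℝ) (pmax i)) →
      lam k * hf0 k < W * Gk hff h0f N p0 k q / pa)
    (hcond : ∀ (k : Fin K) (q : Fin K → ℝ), (∀ i, q i ∈ Set.Icc (0:ℝ) (pmax i)) →
      ∀ b : ℝ, IsBestResponse W pa p0 hff h0f hf0 N lam pmax k q b →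
        pa * (N k + h0f k * p0 + hff k k * b + ∑ j ∈ Finset.univ.erase k, hff j k * q j) ≤
          hff k k * b ^ 2)
    {k : Fin K} {D D' : ℝ}
    (hD : D ∈ Set.Icc (Dmin p0 h0f N k) (Dmin p0 h0f N k + Smax hff pmax k))
    (hD' : D' ∈ Set.Icc (Dmin p0 h0f N k) (Dmin p0 h0f N k + Smax hff pmax k))
    (hle : D ≤ D') (hstep : D' ≤ D + hff k k * brD W pa hff hf0 lam pmax k D) :
    brD W pa hff hf0 lam pmax k D ≤ brD W pa hff hf0 lam pmax k D' := by
  have hDpos : 0 < D := lt_of_lt_of_le (Dmin_pos hp0 hh0f hN k) hD.1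
  have hD'pos : 0 < D' := lt_of_lt_of_le (Dmin_pos hp0 hh0f hN k) hD'.1
  have hc : 0 ≤ lam k * hf0 k := mul_nonneg (hlam k) (hhf0 k).le
  have hpr := price_D hW hpa hhff hpmax hprice hD
  have hpr' := price_D hW hpa hhff hpmax hprice hD'
  obtain ⟨hmem, hbpos, hpsi, _⟩ := br_spec hW hpa (hhff k k) hc hDpos (hpmax k) hpr
  have hcnd := cond_brD hW hpa hp0 hhff hh0f hhf0 hN hlam hpmax hprice hcond hD
  set b := brD W pa hff hf0 lam pmax k D with hbdef
  have hmem' : b ∈ Set.Icc 0 (pmax k) := hmem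
  have hbpos' : 0 < b := hbpos
  have hpsi' : 0 ≤ psi W pa (hff k k) (lam k * hf0 k) D b := hpsi
  have hcnd2 : pa * D' ≤ hff k k * b ^ 2 := by
    have := mul_le_mul_of_nonneg_left hstep hpa.le
    nlinarith
  have hmono := psi_mono_D (c := lam k * hf0 k) hW hpa (hhff k k) hDpos hle hbpos'.le hcnd2
  exact le_br_of_psi_nonneg hW hpa (hhff k k) hc hD'pos (hpmax k) hpr' hmem' (by linarith)

lemma brD_mono (hW : 0 < W) (hpa : 0 < pa) (hp0 : 0 ≤ p0)
    (hhff : ∀ i j, 0 < hff i j) (hh0f : ∀ i, 0 < h0f i) (hhf0 : ∀ i, 0 < hf0 i)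
    (hN : ∀ i, 0 < N i) (hlam : ∀ i, 0 ≤ lam i) (hpmax : ∀ i, 0 < pmax i)
    (hprice : ∀ (k : Fin K) (q : Fin K → ℝ), (∀ i, q i ∈ Set.Icc (0:ℝ) (pmax i)) →
      lam k * hf0 k < W * Gk hff h0f N p0 k q / pa)
    (hcond : ∀ (k : Fin K) (q : Fin K → ℝ), (∀ i, q i ∈ Set.Icc (0:ℝ) (pmax i)) →
      ∀ b : ℝ, IsBestResponse W pa p0 hff h0f hf0 N lam pmax k q b →
        pa * (N k + h0f k * p0 + hff k k * b + ∑ j ∈ Finset.univ.erase k, hff j k * q j) ≤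
          hff k k * b ^ 2)
    {k : Fin K} {D D' : ℝ}
    (hD : D ∈ Set.Icc (Dmin p0 h0f N k) (Dmin p0 h0f N k + Smax hff pmax k))
    (hD' : D' ∈ Set.Icc (Dmin p0 h0f N k) (Dmin p0 h0f N k + Smax hff pmax k))
    (hle : D ≤ D') :
    brD W pa hff hf0 lam pmax k D ≤ brD W pa hff hf0 lam pmax k D' := by
  have hstep_pos : 0 < hff k k * pa := mul_pos (hhff k k) hpa
  have key : ∀ n : ℕ, ∀ D D',
      D ∈ Set.Icc (Dmin p0 h0f N k) (Dmin p0 h0f N k + Smax hff pmax k) →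
      D' ∈ Set.Icc (Dmin p0 h0f N k) (Dmin p0 h0f N k + Smax hff pmax k) →
      D ≤ D' → D' ≤ D + n * (hff k k * pa) →
      brD W pa hff hf0 lam pmax k D ≤ brD W pa hff hf0 lam pmax k D' := by
    intro n
    induction n with
    | zero =>
      intro D D' hD hD' hle hbnd
      simp only [Nat.cast_zero, zero_mul, add_zero] at hbnd
      have : D = D' := le_antisymm hle hbnd
      rw [this]
    | succ n ih =>
      intro D D' hD hD' hle hbnd
      push_cast at hbnd
      set Dm := max D (D' - hff k k * pa) with hDmdef
      have hDmr : Dm ∈ Set.Icc (Dmin p0 h0f N k) (Dmin p0 h0f N k + Smax hff pmax k) := by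
        constructor
        · exact le_trans hD.1 (le_max_left _ _)
        · exact le_trans (max_le hle (by linarith)) hD'.2
      have h1 : brD W pa hff hf0 lam pmax k D ≤ brD W pa hff hf0 lam pmax k Dm := by
        apply ih D Dm hD hDmr (le_max_left _ _)
        apply max_le
        · have : (0:ℝ) ≤ n * (hff k k * pa) := by positivity
          linarith
        · linarith
      have h2 : brD W pa hff hf0 lam pmax k Dm ≤ brD W pa hff hf0 lam pmax k D' := by
        apply brD_mono_step hW hpa hp0 hhff hh0f hhf0 hN hlam hpmax hprice hcond hDmr hD' (max_le hle (by linarith))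
        have hgt := brD_gt_pa hW hpa hp0 hhff hh0f hhf0 hN hlam hpmax hprice hcond hDmr
        have : hff k k * pa < hff k k * brD W pa hff hf0 lam pmax k Dm :=
          mul_lt_mul_of_pos_left hgt (hhff k k)
        have hDm2 : D' - hff k k * pa ≤ Dm := le_max_right _ _
        linarith
      linarith
  obtain ⟨n, hn⟩ := exists_nat_ge ((D' - D) / (hff k k * pa))
  apply key n D D' hD hD' hle
  rw [div_le_iff₀ hstep_pos] at hn
  linarith

lemma psi_scale_neg (hW : 0 < W) (hpa : 0 < pa) (hp0 : 0 ≤ p0)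
    (hhff : ∀ i j, 0 < hff i j) (hh0f : ∀ i, 0 < h0f i) (hhf0 : ∀ i, 0 < hf0 i)
    (hN : ∀ i, 0 < N i) (hlam : ∀ i, 0 ≤ lam i) (hpmax : ∀ i, 0 < pmax i)
    (hprice : ∀ (k : Fin K) (q : Fin K → ℝ), (∀ i, q i ∈ Set.Icc (0:ℝ) (pmax i)) →
      lam k * hf0 k < W * Gk hff h0f N p0 k q / pa)
    (hcond : ∀ (k : Fin K) (q : Fin K → ℝ), (∀ i, q i ∈ Set.Icc (0:ℝ) (pmax i)) →
      ∀ b : ℝ, IsBestResponse W pa p0 hff h0f hf0 N lam pmax k q b →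
        pa * (N k + h0f k * p0 + hff k k * b + ∑ j ∈ Finset.univ.erase k, hff j k * q j) ≤
          hff k k * b ^ 2)
    {k : Fin K} {D D'' α : ℝ}
    (hD : D ∈ Set.Icc (Dmin p0 h0f N k) (Dmin p0 h0f N k + Smax hff pmax k))
    (hD''pos : 0 < D'') (hα : 1 < α)
    (hble : α * brD W pa hff hf0 lam pmax k D ≤ pmax k) (hDD : D'' ≤ α * D) :
    psi W pa (hff k k) (lam k * hf0 k) D'' (α * brD W pa hff hf0 lam pmax k D) < 0 := by
  have hDpos : 0 < D := lt_of_lt_of_le (Dmin_pos hp0 hh0f hN k) hD.1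
  have hc : 0 ≤ lam k * hf0 k := mul_nonneg (hlam k) (hhf0 k).le
  have hpr := price_D hW hpa hhff hpmax hprice hD
  obtain ⟨hmem, hbpos, _, hroot⟩ := br_spec hW hpa (hhff k k) hc hDpos (hpmax k) hpr
  have hcnd := cond_brD hW hpa hp0 hhff hh0f hhf0 hN hlam hpmax hprice hcond hD
  set b := brD W pa hff hf0 lam pmax k D with hbdef
  have hbpos' : 0 < b := hbpos
  have hbM : b < pmax k := by nlinarith
  have hrt : psi W pa (hff k k) (lam k * hf0 k) D b = 0 := hroot hbM
  have s1 : psi W pa (hff k k) (lam k * hf0 k) (α * D) (α * b)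
      < psi W pa (hff k k) (lam k * hf0 k) D b :=
    psi_scale hW hpa (hhff k k) hc hDpos hα hbpos'.le
  have hcnd2 : pa * (α * D) ≤ hff k k * (α * b) ^ 2 := by
    have h1 : pa * D ≤ hff k k * b ^ 2 := by nlinarith [mul_pos (mul_pos (hhff k k) hbpos') hpa]
    nlinarith [mul_le_mul_of_nonneg_left h1 (by linarith : (0:ℝ) ≤ α),
      mul_nonneg (by nlinarith : (0:ℝ) ≤ α ^ 2 - α)
        (mul_nonneg (hhff k k).le (sq_nonneg b))]
  have s2 : psi W pa (hff k k) (lam k * hf0 k) D'' (α * b)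
      ≤ psi W pa (hff k k) (lam k * hf0 k) (α * D) (α * b) :=
    psi_mono_D hW hpa (hhff k k) hD''pos hDD (by positivity) hcnd2
  linarith


end Game
end FGaux

/-- Theorem 2: under the price condition (i) and the SINR-type condition (ii) on best
responses, the follower game has a unique (pure-strategy) Nash equilibrium. -/
theorem followerGame_unique_NE {K : ℕ} (hK : 1 ≤ K)
    (W pa p0 : ℝ) (hW : 0 < W) (hpa : 0 < pa) (hp0 : 0 ≤ p0)
    (hff : Fin K → Fin K → ℝ) (h0f hf0 N lam pmax : Fin K → ℝ)
    (hhff : ∀ i j, 0 < hff i j) (hh0f : ∀ i, 0 < h0f i) (hhf0 : ∀ i, 0 < hf0 i)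
    (hN : ∀ i, 0 < N i) (hlam : ∀ i, 0 ≤ lam i) (hpmax : ∀ i, 0 < pmax i)
    (hprice : ∀ (k : Fin K) (q : Fin K → ℝ), (∀ i, q i ∈ Set.Icc (0:ℝ) (pmax i)) →
      lam k * hf0 k < W * Gk hff h0f N p0 k q / pa)
    (hcond : ∀ (k : Fin K) (q : Fin K → ℝ), (∀ i, q i ∈ Set.Icc (0:ℝ) (pmax i)) →
      ∀ b : ℝ, IsBestResponse W pa p0 hff h0f hf0 N lam pmax k q b →
        pa * (N k + h0f k * p0 + hff k k * b + ∑ j ∈ Finset.univ.erase k, hff j k * q j) ≤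
          hff k k * b ^ 2) :
    ∃! p : Fin K → ℝ, (∀ k, p k ∈ Set.Icc (0:ℝ) (pmax k)) ∧
      ∀ k : Fin K, ∀ x ∈ Set.Icc (0:ℝ) (pmax k),
        payoff W pa p0 hff h0f hf0 N lam k (Function.update p k x) ≤
          payoff W pa p0 hff h0f hf0 N lam k p := by
  classical
  set F : (Fin K → ℝ) → (Fin K → ℝ) :=
    fun q k => FGaux.brD W pa hff hf0 lam pmax k (FGaux.Dk p0 hff h0f N k q) with hFdef
  have hcc : ∀ k : Fin K, 0 ≤ lam k * hf0 k := fun k => mul_nonneg (hlam k) (hhf0 k).le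
  -- basic facts about F
  have hDmem : ∀ (k : Fin K) {q : Fin K → ℝ}, (∀ i, q i ∈ Set.Icc (0:ℝ) (pmax i)) →
      FGaux.Dk p0 hff h0f N k q ∈ Set.Icc (FGaux.Dmin p0 h0f N k)
        (FGaux.Dmin p0 h0f N k + FGaux.Smax hff pmax k) :=
    fun k {q} hq => FGaux.Dk_mem hhff hq
  have hDpos : ∀ (k : Fin K) {q : Fin K → ℝ}, (∀ i, q i ∈ Set.Icc (0:ℝ) (pmax i)) →
      0 < FGaux.Dk p0 hff h0f N k q :=
    fun k {q} hq => lt_of_lt_of_le (FGaux.Dmin_pos hp0 hh0f hN k) (hDmem k hq).1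
  have hmem : ∀ (k : Fin K) (q : Fin K → ℝ), (∀ i, q i ∈ Set.Icc (0:ℝ) (pmax i)) →
      F q k ∈ Set.Icc (0:ℝ) (pmax k) := by
    intro k q hq
    exact (FGaux.br_spec hW hpa (hhff k k) (hcc k) (hDpos k hq) (hpmax k)
      (FGaux.price_D hW hpa hhff hpmax hprice (hDmem k hq))).1
  -- fixed points are NE
  have hNE_of_fix : ∀ p : Fin K → ℝ, (∀ i, p i ∈ Set.Icc (0:ℝ) (pmax i)) → F p = p →
      ∀ k : Fin K, ∀ x ∈ Set.Icc (0:ℝ) (pmax k),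
        payoff W pa p0 hff h0f hf0 N lam k (Function.update p k x) ≤
          payoff W pa p0 hff h0f hf0 N lam k p := by
    intro p hp hfix k x hx
    conv_rhs => rw [← Function.update_eq_self k p]
    rw [FGaux.payoff_update, FGaux.payoff_update]
    have hpk : p k = FGaux.brD W pa hff hf0 lam pmax k (FGaux.Dk p0 hff h0f N k p) :=
      (congrFun hfix k).symm
    rw [hpk]
    exact FGaux.uu_le_uu_br hW hpa (hhff k k) (hcc k) (hDpos k hp) (hpmax k)
      (FGaux.price_D hW hpa hhff hpmax hprice (hDmem k hp)) hx
  -- NEs are fixed points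
  have hfix_of_NE : ∀ p : Fin K → ℝ, (∀ i, p i ∈ Set.Icc (0:ℝ) (pmax i)) →
      (∀ k : Fin K, ∀ x ∈ Set.Icc (0:ℝ) (pmax k),
        payoff W pa p0 hff h0f hf0 N lam k (Function.update p k x) ≤
          payoff W pa p0 hff h0f hf0 N lam k p) → F p = p := by
    intro p hp hNE
    funext k
    by_contra hne
    have h1 := hNE k (F p k) (hmem k p hp)
    rw [FGaux.payoff_update] at h1
    conv_rhs at h1 => rw [← Function.update_eq_self k p]
    rw [FGaux.payoff_update] at h1
    have h2 : FGaux.uu W pa (hff k k) (lam k * hf0 k) (FGaux.Dk p0 hff h0f N k p) (p k)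
        < FGaux.uu W pa (hff k k) (lam k * hf0 k) (FGaux.Dk p0 hff h0f N k p) (F p k) :=
      FGaux.uu_lt_uu_br hW hpa (hhff k k) (hcc k) (hDpos k hp) (hpmax k)
        (FGaux.price_D hW hpa hhff hpmax hprice (hDmem k hp)) (hp k)
        (fun hcontra => hne hcontra.symm)
    linarith
  -- monotonicity of F
  have hDkmono : ∀ (k : Fin K) (q q' : Fin K → ℝ), (∀ j, q j ≤ q' j) →
      FGaux.Dk p0 hff h0f N k q ≤ FGaux.Dk p0 hff h0f N k q' := by
    intro k q q' hle
    unfold FGaux.Dk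
    have : ∑ j ∈ Finset.univ.erase k, hff j k * q j
        ≤ ∑ j ∈ Finset.univ.erase k, hff j k * q' j :=
      Finset.sum_le_sum fun j _ => mul_le_mul_of_nonneg_left (hle j) (hhff j k).le
    linarith
  have hFmono : ∀ (q q' : Fin K → ℝ), (∀ i, q i ∈ Set.Icc (0:ℝ) (pmax i)) →
      (∀ i, q' i ∈ Set.Icc (0:ℝ) (pmax i)) → (∀ j, q j ≤ q' j) → ∀ k, F q k ≤ F q' k := by
    intro q q' hq hq' hle k
    exact FGaux.brD_mono hW hpa hp0 hhff hh0f hhf0 hN hlam hpmax hprice hcond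
      (hDmem k hq) (hDmem k hq') (hDkmono k q q' hle)
  -- existence of a fixed point (Knaster–Tarski by hand)
  set A : Set (Fin K → ℝ) :=
    {q | (∀ i, q i ∈ Set.Icc (0:ℝ) (pmax i)) ∧ ∀ k, q k ≤ F q k} with hAdef
  have hA0 : (fun _ => (0:ℝ)) ∈ A := by
    constructor
    · exact fun i => ⟨le_refl _, (hpmax i).le⟩
    · intro k
      exact (hmem k _ (fun i => ⟨le_refl _, (hpmax i).le⟩)).1
  have hAne : ∀ k : Fin K, ((fun q : Fin K → ℝ => q k) '' A).Nonempty :=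
    fun k => ⟨0, ⟨_, hA0, rfl⟩⟩
  have hAbdd : ∀ k : Fin K, BddAbove ((fun q : Fin K → ℝ => q k) '' A) := by
    intro k
    refine ⟨pmax k, ?_⟩
    rintro x ⟨q, hqA, rfl⟩
    exact (hqA.1 k).2
  set pstar : Fin K → ℝ := fun k => sSup ((fun q : Fin K → ℝ => q k) '' A) with hpstardef
  have hple : ∀ q ∈ A, ∀ k, q k ≤ pstar k :=
    fun q hq k => le_csSup (hAbdd k) ⟨q, hq, rfl⟩
  have hpstar_feas : ∀ i, pstar i ∈ Set.Icc (0:ℝ) (pmax i) := by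
    intro i
    constructor
    · exact le_trans (le_refl 0) (hple _ hA0 i)
    · exact csSup_le (hAne i) (by rintro x ⟨q, hqA, rfl⟩; exact (hqA.1 i).2)
  have h1 : ∀ k, pstar k ≤ F pstar k := by
    intro k
    apply csSup_le (hAne k)
    rintro x ⟨q, hqA, rfl⟩
    exact le_trans (hqA.2 k) (hFmono q pstar hqA.1 hpstar_feas (fun j => hple q hqA j) k)
  have hFA : F pstar ∈ A := by
    refine ⟨fun i => hmem i pstar hpstar_feas, fun k => ?_⟩
    exact hFmono pstar (F pstar) hpstar_feas (fun i => hmem i pstar hpstar_feas) h1 k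
  have hfixstar : F pstar = pstar :=
    funext fun k => le_antisymm (hple _ hFA k) (h1 k)
  -- uniqueness of fixed points
  have hcore : ∀ p q : Fin K → ℝ, (∀ i, p i ∈ Set.Icc (0:ℝ) (pmax i)) →
      (∀ i, q i ∈ Set.Icc (0:ℝ) (pmax i)) → F p = p → F q = q →
      (∃ k, p k < q k) → False := by
    rintro p q hfp hfq hfixp hfixq ⟨k1, hk1⟩
    have hppos : ∀ k, pa < p k := by
      intro k
      rw [← congrFun hfixp k]
      exact FGaux.brD_gt_pa hW hpa hp0 hhff hh0f hhf0 hN hlam hpmax hprice hcond (hDmem k hfp)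
    have hne : (Finset.univ : Finset (Fin K)).Nonempty := ⟨⟨0, hK⟩, Finset.mem_univ _⟩
    set α := Finset.univ.sup' hne (fun k => q k / p k) with hαdef
    have hαk : ∀ k, q k / p k ≤ α := by
      intro k
      rw [hαdef]
      exact Finset.le_sup' (fun k => q k / p k) (Finset.mem_univ k)
    obtain ⟨k0, -, hk0pre⟩ := Finset.exists_mem_eq_sup' hne (fun k => q k / p k)
    have hk0 : α = q k0 / p k0 := by rw [hαdef]; exact hk0pre
    have hα1 : 1 < α := by
      refine lt_of_lt_of_le ?_ (hαk k1)
      rw [lt_div_iff₀ (lt_trans hpa (hppos k1))]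
      linarith
    have hqle : ∀ j, q j ≤ α * p j := by
      intro j
      have := (div_le_iff₀ (lt_trans hpa (hppos j))).1 (hαk j)
      linarith
    have hDD : FGaux.Dk p0 hff h0f N k0 q ≤ α * FGaux.Dk p0 hff h0f N k0 p := by
      unfold FGaux.Dk
      have hs : ∑ j ∈ Finset.univ.erase k0, hff j k0 * q j
          ≤ α * ∑ j ∈ Finset.univ.erase k0, hff j k0 * p j := by
        rw [Finset.mul_sum]
        exact Finset.sum_le_sum fun j _ => by
          have := mul_le_mul_of_nonneg_left (hqle j) (hhff j k0).le
          nlinarith [this]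
      have hdm : 0 < N k0 + h0f k0 * p0 := FGaux.Dmin_pos hp0 hh0f hN k0
      nlinarith [hs, hdm, hα1]
    have hpk0 : p k0 = FGaux.brD W pa hff hf0 lam pmax k0 (FGaux.Dk p0 hff h0f N k0 p) :=
      (congrFun hfixp k0).symm
    have hqk0 : q k0 = FGaux.brD W pa hff hf0 lam pmax k0 (FGaux.Dk p0 hff h0f N k0 q) :=
      (congrFun hfixq k0).symm
    have hαp : α * p k0 = q k0 := by
      rw [hk0, div_mul_cancel₀ _ (ne_of_gt (lt_trans hpa (hppos k0)))]
    have hble : α * FGaux.brD W pa hff hf0 lam pmax k0 (FGaux.Dk p0 hff h0f N k0 p) ≤ pmax k0 := by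
      rw [← hpk0, hαp]
      exact (hfq k0).2
    have hneg := FGaux.psi_scale_neg hW hpa hp0 hhff hh0f hhf0 hN hlam hpmax hprice hcond
      (hDmem k0 hfp) (hDpos k0 hfq) hα1 hble hDD
    rw [← hpk0, hαp, hqk0] at hneg
    have hspec := (FGaux.br_spec hW hpa (hhff k0 k0) (hcc k0) (hDpos k0 hfq) (hpmax k0)
      (FGaux.price_D hW hpa hhff hpmax hprice (hDmem k0 hfq))).2.2.1
    have : FGaux.brD W pa hff hf0 lam pmax k0 (FGaux.Dk p0 hff h0f N k0 q)
        = FGaux.br W pa (hff k0 k0) (lam k0 * hf0 k0) (FGaux.Dk p0 hff h0f N k0 q) (pmax k0) := rfl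
    rw [this] at hneg
    linarith
  have huniq : ∀ p q : Fin K → ℝ, (∀ i, p i ∈ Set.Icc (0:ℝ) (pmax i)) →
      (∀ i, q i ∈ Set.Icc (0:ℝ) (pmax i)) → F p = p → F q = q → p = q := by
    intro p q hfp hfq hfixp hfixq
    by_contra hne
    have : ∃ k, p k ≠ q k := by
      by_contra hall
      push_neg at hall
      exact hne (funext hall)
    obtain ⟨k, hk⟩ := this
    rcases lt_or_gt_of_ne hk with hlt | hgt
    · exact hcore p q hfp hfq hfixp hfixq ⟨k, hlt⟩
    · exact hcore q p hfq hfp hfixq hfixp ⟨k, hgt⟩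
  -- conclusion
  refine ⟨pstar, ⟨hpstar_feas, hNE_of_fix pstar hpstar_feas hfixstar⟩, ?_⟩
  rintro p' ⟨hfeas', hNE'⟩
  exact huniq p' pstar hfeas' hpstar_feas (hfix_of_NE p' hfeas' hNE') hfixstar
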